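/- Let a > 0, K > 0, C ≥ 0 and suppose |f(t, v + x*)| ≤ C·|v| for all t and v. If C < K ≤ a²/4, then the equilibrium x* of the controlled equation ẍ(t) + a·ẋ(t) + f(t, x(h(t))) = −K·[x(t) − x*] is globally asymptotically stable: every twice differentiable solution x satisfies x(t) → x* as t → ∞. -/

import Mathlib

open Filter MeasureTheory Set

private lemma exitIcc (w w' : ℝ → ℝ) (hw : ∀ t, HasDerivAt w (w' t) t)
    (s t₂ B : ℝ) (hB : 0 < B) (hws : |w s| ≤ B)
    (key : ∀ u ∈ Set.Icc s t₂, (∀ v ∈ Set.Icc s u, |w v| ≤ B) → |w u| = B →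
      w u * w' u < 0) :
    ∀ t ∈ Set.Icc s t₂, |w t| ≤ B := by
  by_contra hcon
  push_neg at hcon
  obtain ⟨t₃, ht₃, hbt₃⟩ := hcon
  have hst₃ : s ≤ t₃ := ht₃.1
  set G : Set ℝ := {u | u ∈ Set.Icc s t₃ ∧ ∀ v ∈ Set.Icc s u, |w v| ≤ B} with hG
  have hsG : s ∈ G := by
    refine ⟨⟨le_refl s, hst₃⟩, fun v hv => ?_⟩
    have hv2 : v = s := le_antisymm hv.2 hv.1
    rw [hv2]; exact hws
  have hbdd : BddAbove G := ⟨t₃, fun u hu => hu.1.2⟩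
  set u₀ := sSup G with hu₀
  have hu₀le : u₀ ≤ t₃ := csSup_le ⟨s, hsG⟩ (fun u hu => hu.1.2)
  have hsu₀ : s ≤ u₀ := le_csSup hbdd hsG
  have hpre : ∀ v, s ≤ v → v < u₀ → |w v| ≤ B := by
    intro v hv hvlt
    obtain ⟨u, huG, hvu⟩ := exists_lt_of_lt_csSup ⟨s, hsG⟩ hvlt
    exact huG.2 v ⟨hv, hvu.le⟩
  have hwu₀le : |w u₀| ≤ B := by
    rcases eq_or_lt_of_le hsu₀ with he | hlt
    · rw [← he]; exact hws
    · have hc : ContinuousWithinAt (fun v => |w v|) (Set.Iio u₀) u₀ :=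
        ((hw u₀).continuousAt.abs).continuousWithinAt
      refine le_of_tendsto hc ?_
      filter_upwards [Ioo_mem_nhdsLT_of_mem (Set.mem_Ioc.mpr ⟨hlt, le_refl u₀⟩)] with v hv
      exact hpre v hv.1.le hv.2
  have hu₀G : u₀ ∈ G := by
    refine ⟨⟨hsu₀, hu₀le⟩, fun v hv => ?_⟩
    rcases lt_or_eq_of_le hv.2 with hlt | heqv
    · exact hpre v hv.1 hlt
    · rw [heqv]; exact hwu₀le
  have ht₃G : t₃ ∉ G := fun hGmem => absurd (hGmem.2 t₃ ⟨hst₃, le_refl t₃⟩) (not_le.2 hbt₃)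
  have hu₀lt : u₀ < t₃ := lt_of_le_of_ne hu₀le (fun he => ht₃G (he ▸ hu₀G))
  have hexceed : ∀ v ∈ Set.Ioc u₀ t₃, ∃ q ∈ Set.Ioc u₀ v, B < |w q| := by
    intro v hv
    have hvG : v ∉ G := fun hGmem => absurd (le_csSup hbdd hGmem) (not_le.2 hv.1)
    have hvI : v ∈ Set.Icc s t₃ := ⟨hsu₀.trans hv.1.le, hv.2⟩
    rw [hG] at hvG
    simp only [Set.mem_setOf_eq] at hvG
    push_neg at hvG
    obtain ⟨q, hq, hqB⟩ := hvG hvI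
    refine ⟨q, ⟨?_, hq.2⟩, hqB⟩
    by_contra hqle
    push_neg at hqle
    exact absurd (hu₀G.2 q ⟨hq.1, hqle⟩) (not_le.2 hqB)
  have hseq : ∀ n : ℕ, ∃ q, q ∈ Set.Ioc u₀ (min (u₀ + 1/((n:ℝ)+1)) t₃) ∧ B < |w q| := by
    intro n
    have hmin : u₀ < min (u₀ + 1/((n:ℝ)+1)) t₃ := by
      apply lt_min _ hu₀lt
      have hp : (0:ℝ) < 1/((n:ℝ)+1) := by positivity
      linarith
    obtain ⟨q, hq, hqB⟩ := hexceed (min (u₀ + 1/((n:ℝ)+1)) t₃) ⟨hmin, min_le_right _ _⟩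
    exact ⟨q, hq, hqB⟩
  choose q hq hqB using hseq
  have hqgt : ∀ n, u₀ < q n := fun n => (hq n).1
  have hqle2 : ∀ n, q n ≤ u₀ + 1/((n:ℝ)+1) := fun n => (hq n).2.trans (min_le_left _ _)
  have hqtend : Filter.Tendsto q Filter.atTop (nhds u₀) := by
    have h1 : Filter.Tendsto (fun n : ℕ => u₀ + 1/((n:ℝ)+1)) Filter.atTop (nhds u₀) := by
      have h2 := tendsto_one_div_add_atTop_nhds_zero_nat (𝕜 := ℝ)
      simpa using tendsto_const_nhds.add h2
    exact tendsto_of_tendsto_of_tendsto_of_le_of_le tendsto_const_nhds h1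
      (fun n => (hqgt n).le) hqle2
  have hqne : Filter.Tendsto q Filter.atTop (nhdsWithin u₀ {u₀}ᶜ) :=
    tendsto_nhdsWithin_of_tendsto_nhds_of_eventually_within _ hqtend
      (Filter.Eventually.of_forall (fun n => (hqgt n).ne'))
  have habs : |w u₀| = B := by
    refine le_antisymm hwu₀le ?_
    have hcont : Filter.Tendsto (fun n => |w (q n)|) Filter.atTop (nhds |w u₀|) :=
      ((hw u₀).continuousAt.abs.tendsto).comp hqtend
    exact ge_of_tendsto hcont (Filter.Eventually.of_forall (fun n => (hqB n).le))
  have hkey := key u₀ ⟨hsu₀, hu₀le.trans ht₃.2⟩ hu₀G.2 habs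
  have hderiv : HasDerivAt (fun v => w v ^ 2) (2 * w u₀ * w' u₀) u₀ := by
    have h2 := (hw u₀).pow 2
    norm_num at h2
    exact h2
  have hslope := hasDerivAt_iff_tendsto_slope.mp hderiv
  have hcomp := hslope.comp hqne
  have hposn : ∀ n, 0 ≤ slope (fun v => w v ^ 2) u₀ (q n) := by
    intro n
    rw [slope_def_field]
    apply div_nonneg _ (by linarith [hqgt n])
    have h1 : B^2 < w (q n)^2 := by
      nlinarith [hqB n, hB, abs_nonneg (w (q n)), sq_abs (w (q n))]
    have h3 : w u₀^2 = B^2 := by rw [← sq_abs, habs]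
    nlinarith [h1, h3]
  have hge : (0:ℝ) ≤ 2 * w u₀ * w' u₀ :=
    ge_of_tendsto hcomp (Filter.Eventually.of_forall hposn)
  nlinarith [hkey, hge]

private lemma persistIcc (w w' g : ℝ → ℝ) (hw : ∀ t, HasDerivAt w (w' t) t)
    (lam eps B s t₂ : ℝ) (hB : 0 < B) (hlB : lam * B + eps < 0)
    (hws : |w s| ≤ B)
    (heq : ∀ t ∈ Set.Icc s t₂, w' t = lam * w t + g t)
    (hg : ∀ t ∈ Set.Icc s t₂, |g t| ≤ eps) :
    ∀ t ∈ Set.Icc s t₂, |w t| ≤ B := by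
  refine exitIcc w w' hw s t₂ B hB hws ?_
  intro u hu _ habs
  have h1 := heq u hu
  have h2 := hg u hu
  have hw2 : w u ^ 2 = B ^ 2 := by rw [← sq_abs, habs]
  have h3 : w u * g u ≤ B * eps := by
    calc w u * g u ≤ |w u * g u| := le_abs_self _
      _ = |w u| * |g u| := abs_mul _ _
      _ ≤ B * eps := by rw [habs]; exact mul_le_mul_of_nonneg_left h2 hB.le
  rw [h1]
  have h5 : lam * w u ^ 2 = lam * B ^ 2 := by rw [hw2]
  nlinarith [h5, h3, mul_neg_of_pos_of_neg hB hlB]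

private lemma decayLem (w w' g : ℝ → ℝ) (hw : ∀ t, HasDerivAt w (w' t) t)
    (lam eps T δ : ℝ) (hlam : lam < 0) (heps : 0 ≤ eps) (hδ : 0 < δ)
    (heq : ∀ t ≥ T, w' t = lam * w t + g t) (hg : ∀ t ≥ T, |g t| ≤ eps) :
    ∃ T', ∀ t ≥ T', |w t| ≤ eps / (-lam) + δ := by
  have hnl : 0 < -lam := neg_pos.2 hlam
  set B := eps / (-lam) + δ with hBdef
  have hB : 0 < B := add_pos_of_nonneg_of_pos (div_nonneg heps hnl.le) hδ
  have hcanc : (-lam) * (eps / (-lam)) = eps := mul_div_cancel₀ _ hnl.ne'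
  have hlB : lam * B + eps < 0 := by
    rw [hBdef]
    nlinarith [hcanc, mul_pos hnl hδ]
  have hreach : ∃ s ≥ T, |w s| ≤ B := by
    by_contra hno
    push_neg at hno
    obtain ⟨c, hcdef⟩ : ∃ c : ℝ, c = 2 * B * (lam * B + eps) := ⟨_, rfl⟩
    have hcneg : c < 0 := by rw [hcdef]; nlinarith
    have hder : ∀ u ≥ T, 2 * w u * w' u ≤ c := by
      intro u hu
      have h1 := heq u hu
      have h2 := hg u hu
      have h3 := hno u hu
      have h4 : w u * g u ≤ |w u| * eps := by
        calc w u * g u ≤ |w u * g u| := le_abs_self _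
          _ = |w u| * |g u| := abs_mul _ _
          _ ≤ |w u| * eps := mul_le_mul_of_nonneg_left h2 (abs_nonneg _)
      rw [h1, hcdef]
      nlinarith [h3, h4, abs_nonneg (w u), sq_abs (w u), hB,
        mul_pos (sub_pos.2 h3) hnl]
    have hwc : Continuous w := by
      have hd : Differentiable ℝ w := fun t => (hw t).differentiableAt
      exact hd.continuous
    obtain ⟨t1, ht1def⟩ : ∃ t1 : ℝ, t1 = T + (w T ^ 2) / (-c) + 1 := ⟨_, rfl⟩
    have hq : 0 ≤ (w T ^ 2) / (-c) := div_nonneg (sq_nonneg _) (by linarith)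
    have hTt1 : T < t1 := by rw [ht1def]; linarith
    obtain ⟨ξ, hξ, hslope⟩ := exists_hasDerivAt_eq_slope (fun v => w v ^ 2)
      (fun v => 2 * w v * w' v) hTt1 ((hwc.pow 2).continuousOn)
      (fun v _ => by have h5 := (hw v).pow 2; norm_num at h5; exact h5)
    have h6 : (w t1 ^ 2 - w T ^ 2) / (t1 - T) ≤ c := by
      rw [← hslope]; exact hder ξ hξ.1.le
    have hpos : 0 < t1 - T := by linarith
    have h7 : w t1 ^ 2 - w T ^ 2 ≤ c * (t1 - T) := by
      have := (div_le_iff₀ hpos).mp h6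
      linarith
    have h8 : c * (t1 - T) = c * ((w T ^ 2) / (-c)) + c := by rw [ht1def]; ring
    have h9 : c * ((w T ^ 2) / (-c)) = -(w T ^ 2) := by
      field_simp [ne_of_lt hcneg]
    nlinarith [sq_nonneg (w t1), h7, h8, h9]
  obtain ⟨s, hsT, hws⟩ := hreach
  refine ⟨s, fun t ht => ?_⟩
  exact persistIcc w w' g hw lam eps B s t hB hlB hws
    (fun u hu => heq u (hsT.trans hu.1)) (fun u hu => hg u (hsT.trans hu.1)) t ⟨ht, le_refl t⟩
set_option maxHeartbeats 1000000 in
/-- Theorem 4, part a): if C < K ≤ a²/4, the equilibrium x* of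
ẍ(t) + a·ẋ(t) + f(t, x(h(t))) = −K[x(t) − x*] is globally asymptotically stable. -/
theorem proportional_control_stability_case_a
    (t₀ a K C xs τ : ℝ)
    (f : ℝ → ℝ → ℝ) (h : ℝ → ℝ)
    (hhmeas : Measurable h) (hhle : ∀ t, h t ≤ t) (hhtend : Tendsto h atTop atTop)
    (hτ : 0 < τ) (hdelay : ∀ t, t - h t ≤ τ)
    (ha : 0 < a) (hK : 0 < K) (hC : 0 ≤ C)
    (hfbound : ∀ t v, |f t (v + xs)| ≤ C * |v|)
    (hcond : C < K ∧ K ≤ a ^ 2 / 4)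
    (x x' x'' : ℝ → ℝ)
    (hx' : ∀ t, HasDerivAt x (x' t) t) (hx'' : ∀ t, HasDerivAt x' (x'' t) t)
    (hinit : ∃ M : ℝ, ∀ t ≤ t₀, |x t| ≤ M ∧ |x' t| ≤ M)
    (heq : ∀ t ≥ t₀, x'' t + a * x' t + f t (x (h t)) = -K * (x t - xs)) :
    Tendsto x atTop (nhds xs) := by
  obtain ⟨hCK, hKa⟩ := hcond
  obtain ⟨M, hM⟩ := hinit
  have hM0 : 0 ≤ M := (abs_nonneg _).trans (hM t₀ le_rfl).1
  -- characteristic roots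
  have ha2K : 0 ≤ a ^ 2 - 4 * K := by linarith
  obtain ⟨d, hd0, hd2⟩ : ∃ d : ℝ, 0 ≤ d ∧ d ^ 2 = a ^ 2 - 4 * K :=
    ⟨Real.sqrt (a ^ 2 - 4 * K), Real.sqrt_nonneg _, Real.sq_sqrt ha2K⟩
  have hda : d < a := by nlinarith [hd2, hK, hd0, ha]
  obtain ⟨lam₁, hlam₁⟩ : ∃ l : ℝ, l = (-a + d) / 2 := ⟨_, rfl⟩
  obtain ⟨lam₂, hlam₂⟩ : ∃ l : ℝ, l = (-a - d) / 2 := ⟨_, rfl⟩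
  have hl1 : lam₁ < 0 := by rw [hlam₁]; linarith
  have hl2 : lam₂ < 0 := by rw [hlam₂]; linarith
  have hnl1 : 0 < -lam₁ := neg_pos.2 hl1
  have hnl2 : 0 < -lam₂ := neg_pos.2 hl2
  have hprod : lam₁ * lam₂ = K := by
    rw [hlam₁, hlam₂]
    linear_combination (-(1:ℝ)/4) * hd2
  have hsum : lam₁ + lam₂ = -a := by rw [hlam₁, hlam₂]; ring
  -- reduction to first-order system
  have hy' : ∀ t, HasDerivAt (fun t => x t - xs) (x' t) t := fun t => (hx' t).sub_const xs
  have hz : ∀ t, HasDerivAt (fun t => x' t - lam₂ * (x t - xs)) (x'' t - lam₂ * x' t) t :=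
    fun t => (hx'' t).sub (((hx' t).sub_const xs).const_mul lam₂)
  have hgb : ∀ t, |-(f t (x (h t)))| ≤ C * |x (h t) - xs| := by
    intro t
    have h1 := hfbound t (x (h t) - xs)
    rw [sub_add_cancel] at h1
    rwa [abs_neg]
  have heqz : ∀ t ≥ t₀,
      x'' t - lam₂ * x' t = lam₁ * (x' t - lam₂ * (x t - xs)) + -(f t (x (h t))) := by
    intro t ht
    have hE := heq t ht
    linear_combination hE - x' t * hsum + (x t - xs) * hprod
  have hyz : ∀ t, x' t = lam₂ * (x t - xs) + (x' t - lam₂ * (x t - xs)) := by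
    intro t; ring
  -- initial bounds
  have hyinit : ∀ t ≤ t₀, |x t - xs| ≤ M + |xs| := by
    intro t ht
    calc |x t - xs| ≤ |x t| + |xs| := abs_sub (x t) xs
      _ ≤ M + |xs| := by linarith [(hM t ht).1]
  have hM₀0 : 0 ≤ M + |xs| := add_nonneg hM0 (abs_nonneg _)
  -- choice of bounds B, Bz
  obtain ⟨B, Bz, hM₀B, hBpos, hBz0, hzt₀Bz, hzB, hyB⟩ :
      ∃ B Bz : ℝ, M + |xs| ≤ B ∧ 0 < B ∧ 0 < Bz ∧
        |x' t₀ - lam₂ * (x t₀ - xs)| ≤ Bz ∧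
        lam₁ * Bz + C * B < 0 ∧ lam₂ * B + Bz < 0 := by
    obtain ⟨Mz, hMzdef⟩ : ∃ Mz : ℝ, Mz = |x' t₀ - lam₂ * (x t₀ - xs)| := ⟨_, rfl⟩
    have hMz0 : 0 ≤ Mz := hMzdef ▸ abs_nonneg _
    have hKC : 0 < K - C := by linarith
    obtain ⟨B, hBdef⟩ : ∃ B : ℝ,
        B = max (M + |xs|) (((-lam₁) * (Mz + 1) + 1) / (K - C)) + 1 := ⟨_, rfl⟩
    have hBM₀ : M + |xs| ≤ B := by
      rw [hBdef]; have := le_max_left (M + |xs|) (((-lam₁) * (Mz + 1) + 1) / (K - C)); linarith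
    have hBpos : 0 < B := by
      rw [hBdef]
      have := le_max_left (M + |xs|) (((-lam₁) * (Mz + 1) + 1) / (K - C))
      linarith
    have hBdiv : ((-lam₁) * (Mz + 1) + 1) / (K - C) ≤ B - 1 := by
      rw [hBdef]; have := le_max_right (M + |xs|) (((-lam₁) * (Mz + 1) + 1) / (K - C)); linarith
    have hKCB : (-lam₁) * (Mz + 1) + 1 ≤ (B - 1) * (K - C) := by
      have := (div_le_iff₀ hKC).mp hBdiv
      linarith
    obtain ⟨Q, hQdef⟩ : ∃ Q : ℝ, Q = C * B / (-lam₁) := ⟨_, rfl⟩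
    have hQ0 : 0 ≤ Q := hQdef ▸ div_nonneg (mul_nonneg hC hBpos.le) hnl1.le
    have hQB : Q * (-lam₁) = C * B := by
      rw [hQdef]; exact div_mul_cancel₀ _ hnl1.ne'
    obtain ⟨Bz, hBzdef⟩ : ∃ Bz : ℝ, Bz = max Mz Q + 1 := ⟨_, rfl⟩
    have hBzMz : Mz ≤ Bz := by
      rw [hBzdef]; have := le_max_left Mz Q; linarith
    have hBz0 : 0 < Bz := by
      rw [hBzdef]
      have := le_max_left Mz Q
      linarith
    have hBzQ : Q ≤ Bz - 1 := by
      rw [hBzdef]; have := le_max_right Mz Q; linarith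
    have hzB : lam₁ * Bz + C * B < 0 := by
      have h4 : (Bz - 1) * (-lam₁) ≥ Q * (-lam₁) :=
        mul_le_mul_of_nonneg_right hBzQ hnl1.le
      nlinarith [h4, hQB, hnl1]
    have hBzsum : Bz ≤ Mz + Q + 1 := by
      rw [hBzdef]
      have := max_le (le_add_of_nonneg_right hQ0) (le_add_of_nonneg_left hMz0)
      linarith
    have hyB : lam₂ * B + Bz < 0 := by
      nlinarith [hBzsum, hKCB, hQB, hprod, hnl1, hnl2, hKC, hMz0, hBpos,
        mul_pos hnl1 hnl2]
    exact ⟨B, Bz, hBM₀, hBpos, hBz0, hMzdef ▸ hBzMz, hzB, hyB⟩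
  -- bootstrap: global bound for t ≥ t₀
  have hclaimB : ∀ t ≥ t₀, |x t - xs| ≤ B := by
    intro t ht
    refine exitIcc (fun t => x t - xs) x' hy' t₀ t B hBpos
      ((hyinit t₀ le_rfl).trans hM₀B) ?_ t ⟨ht, le_rfl⟩
    intro u hu hpre habsu
    have hzu : |x' u - lam₂ * (x u - xs)| ≤ Bz := by
      refine persistIcc (fun t => x' t - lam₂ * (x t - xs))
        (fun t => x'' t - lam₂ * x' t) (fun t => -(f t (x (h t)))) hz
        lam₁ (C * B) Bz t₀ u hBz0 hzB hzt₀Bz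
        (fun v hv => heqz v hv.1) ?_ u ⟨hu.1, le_rfl⟩
      intro v hv
      refine (hgb v).trans ?_
      have hyh : |x (h v) - xs| ≤ B := by
        rcases le_or_gt (h v) t₀ with hcase | hcase
        · exact (hyinit _ hcase).trans hM₀B
        · exact hpre (h v) ⟨hcase.le, (hhle v).trans hv.2⟩
      exact mul_le_mul_of_nonneg_left hyh hC
    rw [hyz u]
    have h1 : (x u - xs) ^ 2 = B ^ 2 := by rw [← sq_abs, habsu]
    have h2 : (x u - xs) * (x' u - lam₂ * (x u - xs)) ≤ B * Bz := by
      calc (x u - xs) * (x' u - lam₂ * (x u - xs))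
          ≤ |(x u - xs) * (x' u - lam₂ * (x u - xs))| := le_abs_self _
        _ = |x u - xs| * |x' u - lam₂ * (x u - xs)| := abs_mul _ _
        _ ≤ B * Bz := by rw [habsu]; exact mul_le_mul_of_nonneg_left hzu hBpos.le
    have h5 : lam₂ * (x u - xs) ^ 2 = lam₂ * B ^ 2 := by rw [h1]
    have hexp : (x u - xs) * (lam₂ * (x u - xs) + (x' u - lam₂ * (x u - xs)))
        = lam₂ * (x u - xs) ^ 2 + (x u - xs) * (x' u - lam₂ * (x u - xs)) := by ring
    rw [hexp]
    linarith [h2, h5, mul_neg_of_pos_of_neg hBpos hyB]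
  -- contraction step
  have hstep : ∀ B' : ℝ, 0 < B' → (∃ T, ∀ t ≥ T, |x t - xs| ≤ B') →
      ∀ δ : ℝ, 0 < δ → ∃ T, ∀ t ≥ T, |x t - xs| ≤ C / K * B' + δ := by
    intro B' hB' hT₁ex δ hδ
    obtain ⟨T₁, hT₁⟩ := hT₁ex
    obtain ⟨T₂', hT₂'⟩ := eventually_atTop.mp (hhtend.eventually_ge_atTop T₁)
    have hg2 : ∀ t ≥ max T₂' t₀, |-(f t (x (h t)))| ≤ C * B' := by
      intro t ht
      refine (hgb t).trans (mul_le_mul_of_nonneg_left ?_ hC)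
      exact hT₁ (h t) (hT₂' t ((le_max_left _ _).trans ht))
    obtain ⟨T₃, hT₃⟩ := decayLem (fun t => x' t - lam₂ * (x t - xs))
      (fun t => x'' t - lam₂ * x' t) (fun t => -(f t (x (h t)))) hz
      lam₁ (C * B') (max T₂' t₀) (δ / 2 * (-lam₂)) hl1
      (mul_nonneg hC hB'.le) (by positivity)
      (fun t ht => heqz t ((le_max_right _ _).trans ht)) hg2
    obtain ⟨T₄, hT₄⟩ := decayLem (fun t => x t - xs) x'
      (fun t => x' t - lam₂ * (x t - xs)) hy'
      lam₂ (C * B' / (-lam₁) + δ / 2 * (-lam₂)) T₃ (δ / 2) hl2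
      (add_nonneg (div_nonneg (mul_nonneg hC hB'.le) hnl1.le)
        (by positivity)) (by positivity)
      (fun t _ => hyz t) hT₃
    refine ⟨T₄, fun t ht => (hT₄ t ht).trans (le_of_eq ?_)⟩
    have hKml : (-lam₁) * (-lam₂) = K := by rw [neg_mul_neg]; exact hprod
    rw [← hKml]
    field_simp [hl1.ne, hl2.ne]
    ring
  -- iterate the contraction
  have hρ1 : C / K < 1 := (div_lt_one hK).mpr hCK
  have hρ0 : 0 ≤ C / K := div_nonneg hC hK.le
  rw [Metric.tendsto_atTop]
  intro ε hε
  have hiter : ∀ n : ℕ, ∃ T, ∀ t ≥ T, |x t - xs| ≤ (C / K) ^ n * B + ε / 4 := by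
    intro n
    induction n with
    | zero =>
      exact ⟨t₀, fun t ht => (hclaimB t ht).trans (by norm_num; linarith)⟩
    | succ n ih =>
      have hcn : 0 < (C / K) ^ n * B + ε / 4 := by positivity
      obtain ⟨T, hT⟩ := hstep _ hcn ih (ε / 4 * (1 - C / K)) (by nlinarith)
      exact ⟨T, fun t ht => (hT t ht).trans (le_of_eq (by ring))⟩
  obtain ⟨n, hn⟩ := exists_pow_lt_of_lt_one (show (0:ℝ) < ε / (4 * B) by positivity) hρ1
  obtain ⟨T, hT⟩ := hiter n
  refine ⟨T, fun t ht => ?_⟩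
  rw [Real.dist_eq]
  have h1 := hT t ht
  have h2 : (C / K) ^ n * B < ε / 4 := by
    have h3 := (lt_div_iff₀ (by positivity : (0:ℝ) < 4 * B)).mp hn
    nlinarith
  linarith
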